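/- Let Ω ⊂ ℝ² be a bounded open convex set, let f, g be asymptotic geodesic lines of (Ω, h_Ω) with common boundary point ξ = f(+∞) = g(+∞) ∈ ∂Ω, and assume that Ω admits a unique supporting line at ξ (i.e. there is exactly one Euclidean line ℓ with ξ ∈ ℓ and ℓ ∩ Ω = ∅). Then there exists c ∈ ℝ such that lim_{t→+∞} h_Ω(f(t+c), g(t)) = 0. -/

import Mathlib

open Real Filter Set Metric

/- The Hilbert distance on a (bounded open convex) domain `Ω` in Euclidean space:
for `p ≠ q` it is `log ((‖p' - q‖ * ‖q' - p‖) / (‖p' - p‖ * ‖q' - q‖))` where `p', q'`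
are the two boundary points of the chord through `p` and `q`, labelled so that `p` lies
strictly between `p'` and `q`, and `q` lies strictly between `p` and `q'`. -/

open Classical in
noncomputable def hilbertDist {n : ℕ} (Ω : Set (EuclideanSpace ℝ (Fin n)))
    (p q : EuclideanSpace ℝ (Fin n)) : ℝ :=
  if _h : p = q then 0
  else Classical.epsilon fun d : ℝ =>
    ∃ p' q' : EuclideanSpace ℝ (Fin n), p' ∈ frontier Ω ∧ q' ∈ frontier Ω ∧
      p ∈ openSegment ℝ p' q ∧ q ∈ openSegment ℝ p q' ∧
      d = Real.log ((‖p' - q‖ * ‖q' - p‖) / (‖p' - p‖ * ‖q' - q‖))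

/-- A geodesic line of `(Ω, hilbertDist Ω)`: a map `f : ℝ → Ω` whose image lies on a
Euclidean line and which satisfies `hilbertDist Ω (f s) (f t) = |s - t|`. -/
def IsGeodesicLine {n : ℕ} (Ω : Set (EuclideanSpace ℝ (Fin n)))
    (f : ℝ → EuclideanSpace ℝ (Fin n)) : Prop :=
  (∀ t, f t ∈ Ω) ∧ Collinear ℝ (Set.range f) ∧
    ∀ s t : ℝ, hilbertDist Ω (f s) (f t) = |s - t|

/-- A Euclidean (affine) line in the plane. -/
def IsEuclideanLine {n : ℕ} (L : Set (EuclideanSpace ℝ (Fin n))) : Prop :=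
  ∃ a v : EuclideanSpace ℝ (Fin n), v ≠ 0 ∧ L = {x | ∃ t : ℝ, x = a + t • v}

/-- A supporting line of `Ω` at a boundary point `ξ`. -/
def IsSupportLine (Ω : Set (EuclideanSpace ℝ (Fin 2))) (ξ : EuclideanSpace ℝ (Fin 2))
    (L : Set (EuclideanSpace ℝ (Fin 2))) : Prop :=
  IsEuclideanLine L ∧ ξ ∈ L ∧ L ∩ Ω = ∅

section Generic

variable {n : ℕ} {Ω : Set (EuclideanSpace ℝ (Fin n))}

local notation "E" => EuclideanSpace ℝ (Fin n)

lemma openSegment_param_gt {p' p q : E} (h : p ∈ openSegment ℝ p' q) :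
    ∃ s : ℝ, 1 < s ∧ p' = q + s • (p - q) := by
  obtain ⟨a, b, ha, hb, hab, hx⟩ := h
  refine ⟨1 / a, ?_, ?_⟩
  · rw [lt_div_iff₀ ha, one_mul]; linarith
  · have hax : a • p' = p - b • q := by rw [← hx]; abel
    have : p' = (1 / a) • (p - b • q) := by
      rw [← hax, smul_smul, one_div, inv_mul_cancel₀ (ne_of_gt ha), one_smul]
    rw [this]
    match_scalars
    · field_simp
    · field_simp
      linear_combination (-1) * hab

lemma mem_openSegment_of_param {p q : E} {s : ℝ} (hs : 1 < s) :
    p ∈ openSegment ℝ (q + s • (p - q)) q := by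
  refine ⟨1 / s, 1 - 1 / s, by positivity, ?_, by ring, ?_⟩
  · have : 1 / s < 1 := by rw [div_lt_one (by linarith)]; linarith
    linarith
  · have hs0 : s ≠ 0 := by positivity
    match_scalars <;> (field_simp; try ring)

lemma norm_add_of_openSegment {p' p q : E} (h : p ∈ openSegment ℝ p' q) :
    ‖p' - q‖ = ‖p' - p‖ + ‖p - q‖ := by
  obtain ⟨a, b, ha, hb, hab, hx⟩ := h
  have h1 : p' - p = b • (p' - q) := by
    rw [← hx]; match_scalars
    · linear_combination -hab
    · ring
  have h2 : p - q = a • (p' - q) := by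
    rw [← hx]; match_scalars
    · ring
    · linear_combination hab
  rw [h1, h2, norm_smul, norm_smul, Real.norm_eq_abs, Real.norm_eq_abs,
    abs_of_pos ha, abs_of_pos hb]
  nlinarith [norm_nonneg (p' - q)]

lemma frontier_notMem (hopen : IsOpen Ω) {z : E} (hz : z ∈ frontier Ω) : z ∉ Ω := by
  rw [hopen.frontier_eq] at hz; exact hz.2

lemma frontier_ray_unique (hopen : IsOpen Ω) (hconv : Convex ℝ Ω) {q p p₁ p₂ : E}
    (hq : q ∈ Ω) (h₁ : p₁ ∈ frontier Ω) (h₂ : p₂ ∈ frontier Ω)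
    (hs₁ : p ∈ openSegment ℝ p₁ q) (hs₂ : p ∈ openSegment ℝ p₂ q) : p₁ = p₂ := by
  obtain ⟨s₁, hs₁', rfl⟩ := openSegment_param_gt hs₁
  obtain ⟨s₂, hs₂', rfl⟩ := openSegment_param_gt hs₂
  have key : ∀ a b : ℝ, 1 < a → 1 < b → a < b → q + a • (p - q) ∈ frontier Ω →
      q + b • (p - q) ∈ frontier Ω → False := by
    intro a b ha hb hab hfa hfb
    have hmem : q + a • (p - q) ∈ openSegment ℝ q (q + b • (p - q)) := by
      refine ⟨1 - a / b, a / b, ?_, by positivity, by ring, ?_⟩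
      · have : a / b < 1 := by rw [div_lt_one (by linarith)]; exact hab
        linarith
      · match_scalars
        · field_simp
          ring
        · field_simp
    have hmem2 := hconv.openSegment_interior_closure_subset_interior
      (by rwa [hopen.interior_eq]) (frontier_subset_closure hfb) hmem
    rw [hopen.interior_eq] at hmem2
    exact frontier_notMem hopen hfa hmem2
  rcases lt_trichotomy s₁ s₂ with h | h | h
  · exact (key s₁ s₂ hs₁' hs₂' h h₁ h₂).elim
  · rw [h]
  · exact (key s₂ s₁ hs₂' hs₁' h h₂ h₁).elim

lemma exists_chord_point (hopen : IsOpen Ω) (hconv : Convex ℝ Ω)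
    (hbdd : Bornology.IsBounded Ω) {p q : E} (hp : p ∈ Ω) (hq : q ∈ Ω) (hne : p ≠ q) :
    ∃ p', p' ∈ frontier Ω ∧ p ∈ openSegment ℝ p' q := by
  set v := p - q with hv
  have hv0 : v ≠ 0 := sub_ne_zero.2 hne
  set S : Set ℝ := {s : ℝ | q + s • v ∈ Ω} with hS
  have hmap : Continuous fun s : ℝ => q + s • v :=
    continuous_const.add (continuous_id.smul continuous_const)
  have hSopen : IsOpen S := hopen.preimage hmap
  have h1 : (1 : ℝ) ∈ S := by
    have : q + (1:ℝ) • v = p := by rw [hv]; simp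
    simp only [hS, mem_setOf_eq, this]; exact hp
  have hSbdd : BddAbove S := by
    obtain ⟨R, hR⟩ := hbdd.exists_norm_le
    refine ⟨(R + ‖q‖) / ‖v‖, fun s hs => ?_⟩
    have h2 : ‖q + s • v‖ ≤ R := hR _ hs
    have h3 : |s| * ‖v‖ ≤ R + ‖q‖ := by
      have h4 : ‖(q + s • v) - q‖ ≤ ‖q + s • v‖ + ‖q‖ := norm_sub_le _ _
      have h5 : ‖(q + s • v) - q‖ = |s| * ‖v‖ := by
        simp [norm_smul]
      linarith
    rw [le_div_iff₀ (norm_pos_iff.2 hv0)]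
    nlinarith [le_abs_self s, norm_nonneg v, abs_nonneg s]
  set ssup := sSup S with hssup
  have hSne : S.Nonempty := ⟨1, h1⟩
  have hnotmem : ssup ∉ S := by
    intro hmem
    obtain ⟨ε, hε, hball⟩ := Metric.isOpen_iff.1 hSopen ssup hmem
    have : ssup + ε / 2 ∈ S := hball (by simp [abs_of_pos hε]; linarith)
    have := le_csSup hSbdd this
    linarith
  have hle : 1 ≤ ssup := le_csSup hSbdd h1
  have hlt : 1 < ssup := lt_of_le_of_ne hle (fun h => hnotmem (h ▸ h1))
  refine ⟨q + ssup • v, ?_, ?_⟩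
  · rw [hopen.frontier_eq, mem_diff]
    constructor
    · have hcl : ssup ∈ closure S := csSup_mem_closure hSne hSbdd
      have := hmap.closure_preimage_subset Ω
      have h6 : closure S ⊆ (fun s : ℝ => q + s • v) ⁻¹' closure Ω := by
        have : S ⊆ (fun s : ℝ => q + s • v) ⁻¹' closure Ω :=
          fun s hs => subset_closure hs
        exact closure_minimal this (IsClosed.preimage hmap isClosed_closure)
      exact h6 hcl
    · exact hnotmem
  · exact mem_openSegment_of_param hlt

lemma hilbertDist_self (p : E) : hilbertDist Ω p p = 0 := by
  simp [hilbertDist]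

lemma hilbertDist_eq (hopen : IsOpen Ω) (hconv : Convex ℝ Ω) {p q p' q' : E}
    (hp : p ∈ Ω) (hq : q ∈ Ω) (hne : p ≠ q)
    (hp' : p' ∈ frontier Ω) (hq' : q' ∈ frontier Ω)
    (hpseg : p ∈ openSegment ℝ p' q) (hqseg : q ∈ openSegment ℝ p q') :
    hilbertDist Ω p q = Real.log ((‖p' - q‖ * ‖q' - p‖) / (‖p' - p‖ * ‖q' - q‖)) := by
  rw [hilbertDist, dif_neg hne]
  have hex : ∃ d : ℝ, ∃ p₁ q₁ : E, p₁ ∈ frontier Ω ∧ q₁ ∈ frontier Ω ∧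
      p ∈ openSegment ℝ p₁ q ∧ q ∈ openSegment ℝ p q₁ ∧
      d = Real.log ((‖p₁ - q‖ * ‖q₁ - p‖) / (‖p₁ - p‖ * ‖q₁ - q‖)) :=
    ⟨_, p', q', hp', hq', hpseg, hqseg, rfl⟩
  obtain ⟨p₁, q₁, h₁, h₂, h₃, h₄, h₅⟩ := Classical.epsilon_spec hex
  have e1 : p₁ = p' := frontier_ray_unique hopen hconv hq h₁ hp' h₃ hpseg
  have e2 : q₁ = q' :=
    frontier_ray_unique (q := p) (p := q) hopen hconv hp h₂ hq'
      (by rw [openSegment_symm]; exact h₄) (by rw [openSegment_symm]; exact hqseg)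
  rw [h₅, e1, e2]

lemma norm_aff (a v : E) (c d : ℝ) : ‖(a + c • v) - (a + d • v)‖ = |c - d| * ‖v‖ := by
  have h : (a + c • v) - (a + d • v) = (c - d) • v := by match_scalars <;> ring
  rw [h, norm_smul, Real.norm_eq_abs]

lemma slice_Ioo (hopen : IsOpen Ω) (hconv : Convex ℝ Ω) (hbdd : Bornology.IsBounded Ω)
    {a v : E} (hv : v ≠ 0) (hne : ∃ s : ℝ, a + s • v ∈ Ω) :
    ∃ α β : ℝ, α < β ∧ {s : ℝ | a + s • v ∈ Ω} = Ioo α β := by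
  set S : Set ℝ := {s : ℝ | a + s • v ∈ Ω} with hS
  have hmap : Continuous fun s : ℝ => a + s • v :=
    continuous_const.add (continuous_id.smul continuous_const)
  have hSopen : IsOpen S := hopen.preimage hmap
  have hSne : S.Nonempty := hne
  have habs : ∀ s ∈ S, |s| ≤ (Classical.choose hbdd.exists_norm_le + ‖a‖) / ‖v‖ := by
    intro s hs
    set R := Classical.choose hbdd.exists_norm_le
    have hR : ∀ x ∈ Ω, ‖x‖ ≤ R := Classical.choose_spec hbdd.exists_norm_le
    have h2 : ‖a + s • v‖ ≤ R := hR _ hs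
    have h4 : ‖(a + s • v) - a‖ ≤ ‖a + s • v‖ + ‖a‖ := norm_sub_le _ _
    have h5 : ‖(a + s • v) - a‖ = |s| * ‖v‖ := by simp [norm_smul]
    rw [le_div_iff₀ (norm_pos_iff.2 hv)]
    linarith
  have hSbddA : BddAbove S := ⟨_, fun s hs => (le_abs_self s).trans (habs s hs)⟩
  have hSbddB : BddBelow S := ⟨-_, fun s hs => by
    have := (neg_abs_le s)
    have := habs s hs
    simp only [neg_le]
    linarith [neg_le_abs s]⟩
  have hSconv : Convex ℝ S := by
    intro x hx y hy ta tb hta htb htab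
    show a + (ta * x + tb * y) • v ∈ Ω
    have heq : a + (ta * x + tb * y) • v = ta • (a + x • v) + tb • (a + y • v) := by
      match_scalars <;> ring_nf <;> linarith
    rw [heq]
    exact hconv hx hy hta htb htab
  have hnotmemB : sSup S ∉ S := by
    intro hmem
    obtain ⟨ε, hε, hball⟩ := Metric.isOpen_iff.1 hSopen (sSup S) hmem
    have : sSup S + ε / 2 ∈ S := hball (by simp [abs_of_pos hε]; linarith)
    have := le_csSup hSbddA this
    linarith
  have hnotmemA : sInf S ∉ S := by
    intro hmem
    obtain ⟨ε, hε, hball⟩ := Metric.isOpen_iff.1 hSopen (sInf S) hmem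
    have : sInf S - ε / 2 ∈ S := hball (by simp [abs_of_pos hε]; linarith [abs_of_pos hε])
    have := csInf_le hSbddB this
    linarith
  obtain ⟨s₀, hs₀⟩ := id hSne
  have hαβ : sInf S < sSup S := by
    have h1 := csInf_le hSbddB hs₀
    have h2 := le_csSup hSbddA hs₀
    rcases eq_or_lt_of_le h1 with h | h
    · rcases eq_or_lt_of_le h2 with h' | h'
      · exact absurd (by rw [h]; exact hs₀) hnotmemA
      · rw [h]; exact h'
    · exact lt_of_lt_of_le h h2
  refine ⟨sInf S, sSup S, hαβ, ?_⟩
  ext s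
  constructor
  · intro hs
    have h1 := csInf_le hSbddB hs
    have h2 := le_csSup hSbddA hs
    constructor
    · rcases eq_or_lt_of_le h1 with h | h
      · exact absurd (by rw [h]; exact hs) hnotmemA
      · exact h
    · rcases eq_or_lt_of_le h2 with h | h
      · exact absurd (by rw [← h]; exact hs) hnotmemB
      · exact h
  · intro ⟨h1, h2⟩
    obtain ⟨x, hx, hxs⟩ := exists_lt_of_csInf_lt hSne h1
    obtain ⟨y, hy, hys⟩ := exists_lt_of_lt_csSup hSne h2
    exact hSconv.ordConnected.out hx hy ⟨le_of_lt hxs, le_of_lt hys⟩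

lemma slice_frontier (hopen : IsOpen Ω) {a v : E} {α β : ℝ} (hαβ : α < β)
    (hIoo : {s : ℝ | a + s • v ∈ Ω} = Ioo α β) :
    a + α • v ∈ frontier Ω ∧ a + β • v ∈ frontier Ω := by
  have hmap : Continuous fun s : ℝ => a + s • v :=
    continuous_const.add (continuous_id.smul continuous_const)
  have hsub : closure (Ioo α β) ⊆ (fun s : ℝ => a + s • v) ⁻¹' closure Ω := by
    apply closure_minimal _ (IsClosed.preimage hmap isClosed_closure)
    rw [← hIoo]
    exact fun s hs => subset_closure hs
  have hcl : closure (Ioo α β) = Icc α β := closure_Ioo (ne_of_lt hαβ)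
  constructor
  · rw [hopen.frontier_eq, mem_diff]
    refine ⟨hsub (by rw [hcl]; exact ⟨le_refl _, le_of_lt hαβ⟩), ?_⟩
    intro hmem
    have : α ∈ Ioo α β := by rw [← hIoo] at *; exact hmem
    simp at this
  · rw [hopen.frontier_eq, mem_diff]
    refine ⟨hsub (by rw [hcl]; exact ⟨le_of_lt hαβ, le_refl _⟩), ?_⟩
    intro hmem
    have : β ∈ Ioo α β := by rw [← hIoo] at *; exact hmem
    simp at this

lemma geodesic_core (hopen : IsOpen Ω) (hconv : Convex ℝ Ω) (hbdd : Bornology.IsBounded Ω)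
    {f : ℝ → E} {ξ a v : E} {r : ℝ → ℝ}
    (hΩf : ∀ t, f t ∈ Ω) (hdist : ∀ s t : ℝ, hilbertDist Ω (f s) (f t) = |s - t|)
    (hv : v ≠ 0) (hr : ∀ t, f t = a + r t • v) (hξ : ξ ∈ frontier Ω)
    (hfξ : Tendsto f atTop (nhds ξ))
    (hrlim : Tendsto r atTop (nhds (sSup {s : ℝ | a + s • v ∈ Ω}))) :
    ∃ u : E, u ≠ 0 ∧ (∀ t, ∃ μ : ℝ, 0 < μ ∧ f t - ξ = μ • u) ∧
      ∃ C : ℝ, 0 < C ∧ Tendsto (fun t => Real.exp t • (f t - ξ)) atTop (nhds (C • u)) := by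
  obtain ⟨α, β, hαβ, hIoo⟩ := slice_Ioo hopen hconv hbdd hv ⟨r 0, by rw [← hr 0]; exact hΩf 0⟩
  have hsup : sSup {s : ℝ | a + s • v ∈ Ω} = β := by rw [hIoo]; exact csSup_Ioo hαβ
  rw [hsup] at hrlim
  have hrmem : ∀ t, r t ∈ Ioo α β := fun t => by
    rw [← hIoo]; show a + r t • v ∈ Ω; rw [← hr t]; exact hΩf t
  have hξeq : ξ = a + β • v := by
    have h1 : Tendsto (fun t => a + r t • v) atTop (nhds (a + β • v)) :=
      tendsto_const_nhds.add (hrlim.smul_const v)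
    have h2 : (fun t => a + r t • v) = f := funext fun t => (hr t).symm
    rw [h2] at h1
    exact tendsto_nhds_unique hfξ h1
  obtain ⟨hfrα, hfrβ⟩ := slice_frontier hopen hαβ hIoo
  have hKpos : (0:ℝ) < ‖v‖ := norm_pos_iff.2 hv
  have hr0 := hrmem 0
  have r0α : (0:ℝ) < r 0 - α := by have := hr0.1; linarith
  have key : ∀ t : ℝ, r 0 < r t → 0 < t →
      Real.exp t • (f t - ξ) = (-((r t - α) * (β - r 0) / (r 0 - α))) • v := by
    intro t hrt ht
    have hrtm := hrmem t
    have hne : f 0 ≠ f t := by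
      intro h
      have : hilbertDist Ω (f 0) (f t) = 0 := by rw [h]; exact hilbertDist_self _
      rw [hdist 0 t] at this
      rw [abs_sub_comm, abs_of_pos (by linarith : (0:ℝ) < t - 0)] at this
      linarith
    have hd : hilbertDist Ω (f 0) (f t) = t := by
      rw [hdist 0 t, abs_sub_comm, abs_of_pos (by linarith : (0:ℝ) < t - 0)]
      ring
    have hrtr0 : (0:ℝ) < r t - r 0 := by linarith
    -- first segment: f 0 between a+α•v and f t
    have hs₁ : (1:ℝ) < (r t - α) / (r t - r 0) := by
      rw [lt_div_iff₀ hrtr0, one_mul]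
      have := hr0.1; linarith
    have hform₁ : a + α • v = f t + ((r t - α) / (r t - r 0)) • (f 0 - f t) := by
      rw [hr 0, hr t]
      match_scalars
      · field_simp; ring
      · field_simp; ring
    have hseg₁ : f 0 ∈ openSegment ℝ (a + α • v) (f t) := by
      rw [hform₁]; exact mem_openSegment_of_param hs₁
    -- second segment: f t between f 0 and a+β•v
    have hs₂ : (1:ℝ) < (β - r 0) / (r t - r 0) := by
      rw [lt_div_iff₀ hrtr0, one_mul]
      have := hrtm.2; linarith
    have hform₂ : a + β • v = f 0 + ((β - r 0) / (r t - r 0)) • (f t - f 0) := by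
      rw [hr 0, hr t]
      match_scalars
      · field_simp; ring
      · field_simp; try ring
    have hseg₂ : f t ∈ openSegment ℝ (f 0) (a + β • v) := by
      rw [openSegment_symm, hform₂]
      exact mem_openSegment_of_param hs₂
    have hev := hilbertDist_eq hopen hconv (hΩf 0) (hΩf t) hne hfrα hfrβ hseg₁ hseg₂
    rw [hd] at hev
    have n1 : ‖a + α • v - f t‖ = (r t - α) * ‖v‖ := by
      rw [hr t, norm_aff, abs_of_neg (by linarith [hrtm.1] : α - r t < 0)]; ring
    have n2 : ‖a + β • v - f 0‖ = (β - r 0) * ‖v‖ := by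
      rw [hr 0, norm_aff, abs_of_pos (by linarith [hr0.2] : (0:ℝ) < β - r 0)]
    have n3 : ‖a + α • v - f 0‖ = (r 0 - α) * ‖v‖ := by
      rw [hr 0, norm_aff, abs_of_neg (by linarith [hr0.1] : α - r 0 < 0)]; ring
    have n4 : ‖a + β • v - f t‖ = (β - r t) * ‖v‖ := by
      rw [hr t, norm_aff, abs_of_pos (by linarith [hrtm.2] : (0:ℝ) < β - r t)]
    rw [n1, n2, n3, n4] at hev
    have hβrt : (0:ℝ) < β - r t := by linarith [hrtm.2]
    have hβr0 : (0:ℝ) < β - r 0 := by linarith [hr0.2]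
    have hrtα : (0:ℝ) < r t - α := by linarith [hrtm.1]
    have hX : (r t - α) * ‖v‖ * ((β - r 0) * ‖v‖) / ((r 0 - α) * ‖v‖ * ((β - r t) * ‖v‖)) =
        (r t - α) * (β - r 0) / ((r 0 - α) * (β - r t)) := by
      field_simp
    rw [hX] at hev
    have hXpos : (0:ℝ) < (r t - α) * (β - r 0) / ((r 0 - α) * (β - r t)) := by positivity
    have hexp : Real.exp t = (r t - α) * (β - r 0) / ((r 0 - α) * (β - r t)) := by
      have := congrArg Real.exp hev
      rwa [Real.exp_log hXpos] at this
    have hft : f t - ξ = (r t - β) • v := by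
      rw [hξeq, hr t]; match_scalars <;> ring
    rw [hft, smul_smul, hexp]
    congr 1
    field_simp
    ring
  have heven : ∀ᶠ t : ℝ in atTop, Real.exp t • (f t - ξ) =
      (-((r t - α) * (β - r 0) / (r 0 - α))) • v := by
    filter_upwards [hrlim.eventually (eventually_gt_nhds hr0.2), eventually_gt_atTop 0]
      with t h1 h2
    exact key t h1 h2
  refine ⟨-v, neg_ne_zero.2 hv, ?_, ?_⟩
  · intro t
    refine ⟨β - r t, by linarith [(hrmem t).2], ?_⟩
    rw [hξeq, hr t]
    match_scalars <;> ring
  · refine ⟨(β - α) * (β - r 0) / (r 0 - α), ?_, ?_⟩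
    · have h1 : (0:ℝ) < β - α := by linarith
      have h2 : (0:ℝ) < β - r 0 := by linarith [hr0.2]
      positivity
    · have h1 : Tendsto (fun t => -((r t - α) * (β - r 0) / (r 0 - α))) atTop
          (nhds (-((β - α) * (β - r 0) / (r 0 - α)))) :=
        (((hrlim.sub_const α).mul_const (β - r 0)).div_const (r 0 - α)).neg
      have hlim := h1.smul_const v
      have h3 : ((β - α) * (β - r 0) / (r 0 - α)) • (-v) =
          (-((β - α) * (β - r 0) / (r 0 - α))) • v := by
        rw [smul_neg, neg_smul]
      rw [h3]
      exact Tendsto.congr' (heven.mono fun t ht => ht.symm) hlim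

lemma geodesic_struct (hopen : IsOpen Ω) (hconv : Convex ℝ Ω) (hbdd : Bornology.IsBounded Ω)
    {f : ℝ → E} {ξ : E} (hf : IsGeodesicLine Ω f) (hξ : ξ ∈ frontier Ω)
    (hfξ : Tendsto f atTop (nhds ξ)) :
    ∃ u : E, u ≠ 0 ∧ (∀ t, ∃ μ : ℝ, 0 < μ ∧ f t - ξ = μ • u) ∧
      ∃ C : ℝ, 0 < C ∧ Tendsto (fun t => Real.exp t • (f t - ξ)) atTop (nhds (C • u)) := by
  obtain ⟨hΩf, hcol, hdist⟩ := hf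
  have hinj : f 0 ≠ f 1 := by
    intro h
    have h0 : hilbertDist Ω (f 0) (f 1) = 0 := by rw [h]; exact hilbertDist_self _
    rw [hdist 0 1] at h0
    norm_num at h0
  obtain ⟨v, hva⟩ := (collinear_iff_of_mem (mem_range_self (0:ℝ))).1 hcol
  set a := f 0 with ha
  have hv : v ≠ 0 := by
    rintro rfl
    obtain ⟨r, hr⟩ := hva (f 1) (mem_range_self 1)
    apply hinj
    rw [hr]
    simp
  set r : ℝ → ℝ := fun t => (inner ℝ (f t - a) v : ℝ) / ‖v‖ ^ 2 with hrdef
  have hr : ∀ t, f t = a + r t • v := by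
    intro t
    obtain ⟨c, hc⟩ := hva (f t) (mem_range_self t)
    have hc' : f t = a + c • v := by rw [hc]; simp [vadd_eq_add, add_comm]
    have : r t = c := by
      show (inner ℝ (f t - a) v : ℝ) / ‖v‖ ^ 2 = c
      rw [hc']
      rw [show a + c • v - a = c • v by abel, real_inner_smul_left,
        real_inner_self_eq_norm_sq]
      have hv2 : (‖v‖:ℝ) ≠ 0 := ne_of_gt (norm_pos_iff.2 hv)
      field_simp
    rw [this]; exact hc'
  set S : Set ℝ := {s : ℝ | a + s • v ∈ Ω} with hS
  obtain ⟨α, β, hαβ, hIoo⟩ := slice_Ioo hopen hconv hbdd hv ⟨r 0, by rw [← hr 0]; exact hΩf 0⟩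
  have hrcont : Tendsto r atTop (nhds ((inner ℝ (ξ - a) v : ℝ) / ‖v‖ ^ 2)) := by
    apply Tendsto.div_const
    exact Tendsto.inner (hfξ.sub tendsto_const_nhds) tendsto_const_nhds
  set rβ := (inner ℝ (ξ - a) v : ℝ) / ‖v‖ ^ 2 with hrβ
  have hξeq : ξ = a + rβ • v := by
    have h1 : Tendsto (fun t => a + r t • v) atTop (nhds (a + rβ • v)) :=
      tendsto_const_nhds.add (hrcont.smul_const v)
    have h2 : (fun t => a + r t • v) = f := funext fun t => (hr t).symm
    rw [h2] at h1
    exact tendsto_nhds_unique hfξ h1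
  have hrmem : ∀ t, r t ∈ Ioo α β := fun t => by
    rw [← hIoo]; show a + r t • v ∈ Ω; rw [← hr t]; exact hΩf t
  have hrβIcc : rβ ∈ Icc α β := by
    refine isClosed_Icc.mem_of_tendsto hrcont (Eventually.of_forall fun t => ?_)
    exact ⟨le_of_lt (hrmem t).1, le_of_lt (hrmem t).2⟩
  have hrβnot : rβ ∉ Ioo α β := by
    intro hmem
    rw [← hIoo] at hmem
    have h7 : a + rβ • v ∈ Ω := hmem
    rw [← hξeq] at h7
    exact frontier_notMem hopen hξ h7
  have hcases : rβ = α ∨ rβ = β := by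
    rcases eq_or_lt_of_le hrβIcc.1 with h | h
    · exact Or.inl h.symm
    · rcases eq_or_lt_of_le hrβIcc.2 with h' | h'
      · exact Or.inr h'
      · exact absurd ⟨h, h'⟩ hrβnot
  rcases hcases with hc | hc
  · -- rβ = α : use direction -v
    have hr' : ∀ t, f t = a + (-(r t)) • (-v) := by intro t; rw [hr t]; simp
    have hS' : {s : ℝ | a + s • (-v) ∈ Ω} = Ioo (-β) (-α) := by
      ext s
      have : a + s • (-v) = a + (-s) • v := by simp
      rw [mem_setOf_eq, this]
      constructor
      · intro hmem
        have : -s ∈ Ioo α β := by rw [← hIoo]; exact hmem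
        exact ⟨by linarith [this.2], by linarith [this.1]⟩
      · intro ⟨h1, h2⟩
        have : -s ∈ Ioo α β := ⟨by linarith, by linarith⟩
        rw [← hIoo] at this
        exact this
    have hsup' : sSup {s : ℝ | a + s • (-v) ∈ Ω} = -α := by
      rw [hS']; exact csSup_Ioo (by linarith)
    apply geodesic_core hopen hconv hbdd hΩf hdist (neg_ne_zero.2 hv) hr' hξ hfξ
    rw [hsup', ← hc]
    exact hrcont.neg
  · -- rβ = β : direct
    have hsup : sSup S = β := by rw [hS, hIoo]; exact csSup_Ioo hαβ
    apply geodesic_core hopen hconv hbdd hΩf hdist hv hr hξ hfξ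
    rw [hsup, ← hc]
    exact hrcont

end Generic

noncomputable section Planar

abbrev E2 := EuclideanSpace ℝ (Fin 2)

lemma perp_span_eq {w v : E2} (hw : w ≠ 0) (hv : v ≠ 0) (hperp : (inner ℝ w v : ℝ) = 0) :
    (Submodule.span ℝ {w})ᗮ = Submodule.span ℝ {v} := by
  have h1 : Submodule.span ℝ {v} ≤ (Submodule.span ℝ {w})ᗮ := by
    rw [Submodule.span_singleton_le_iff_mem, Submodule.mem_orthogonal]
    intro u hu
    obtain ⟨c, rfl⟩ := Submodule.mem_span_singleton.1 hu
    rw [real_inner_smul_left, hperp, mul_zero]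
  refine (Submodule.eq_of_le_of_finrank_eq h1 ?_).symm
  have h2 := Submodule.finrank_add_finrank_orthogonal (Submodule.span ℝ {w} : Submodule ℝ E2)
  rw [finrank_span_singleton hw] at h2
  rw [finrank_span_singleton hv]
  have h3 : Module.finrank ℝ E2 = 2 := finrank_euclideanSpace_fin
  omega

lemma exists_perp {w : E2} (hw : w ≠ 0) : ∃ v : E2, v ≠ 0 ∧ (inner ℝ w v : ℝ) = 0 := by
  have h2 := Submodule.finrank_add_finrank_orthogonal (Submodule.span ℝ {w} : Submodule ℝ E2)
  rw [finrank_span_singleton hw] at h2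
  have h3 : Module.finrank ℝ E2 = 2 := finrank_euclideanSpace_fin
  have h4 : Module.finrank ℝ ((Submodule.span ℝ {w})ᗮ : Submodule ℝ E2) = 1 := by omega
  have h5 : (Submodule.span ℝ {w})ᗮ ≠ ⊥ := by
    intro h
    rw [h] at h4
    simp at h4
  obtain ⟨v, hv, hv0⟩ := Submodule.exists_mem_ne_zero_of_ne_bot h5
  exact ⟨v, hv0, (Submodule.mem_orthogonal _ _).1 hv w (Submodule.mem_span_singleton_self w)⟩

/-- The kernel-line of a nonzero vector is a Euclidean line. -/
lemma unit_normalize {w : E2} (hw : w ≠ 0) : ‖‖w‖⁻¹ • w‖ = 1 := by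
  rw [norm_smul, Real.norm_eq_abs, abs_inv, abs_norm]
  field_simp

lemma isEuclideanLine_kernel {w : E2} (ξ : E2) (hw : w ≠ 0) :
    IsEuclideanLine {x : E2 | (inner ℝ (x - ξ) w : ℝ) = 0} := by
  obtain ⟨v, hv0, hperp⟩ := exists_perp hw
  refine ⟨ξ, v, hv0, ?_⟩
  ext x
  simp only [mem_setOf_eq]
  constructor
  · intro hx
    have hxm : x - ξ ∈ (Submodule.span ℝ {w})ᗮ := by
      rw [Submodule.mem_orthogonal]
      intro u hu
      obtain ⟨c, rfl⟩ := Submodule.mem_span_singleton.1 hu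
      rw [real_inner_smul_left, real_inner_comm, hx, mul_zero]
    rw [perp_span_eq hw hv0 hperp] at hxm
    obtain ⟨c, hc⟩ := Submodule.mem_span_singleton.1 hxm
    exact ⟨c, by rw [hc]; abel⟩
  · rintro ⟨t, rfl⟩
    rw [show ξ + t • v - ξ = t • v by abel, real_inner_smul_left, real_inner_comm, hperp,
      mul_zero]

/-- Every support line through ξ is the kernel-line of a unit normal. -/
lemma supportLine_normal {L : Set E2} {ξ : E2} (hL : IsEuclideanLine L) (hξL : ξ ∈ L) :
    ∃ w : E2, ‖w‖ = 1 ∧ L = {x : E2 | (inner ℝ (x - ξ) w : ℝ) = 0} := by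
  obtain ⟨a, v, hv0, rfl⟩ := hL
  obtain ⟨t₀, ht₀⟩ := hξL
  obtain ⟨w, hw0, hperp⟩ := exists_perp hv0
  refine ⟨‖w‖⁻¹ • w, unit_normalize hw0, ?_⟩
  have hperp' : (inner ℝ v (‖w‖⁻¹ • w) : ℝ) = 0 := by
    rw [real_inner_smul_right v w ‖w‖⁻¹, hperp, mul_zero]
  have hw0' : ‖w‖⁻¹ • w ≠ 0 := by
    intro h
    have := unit_normalize hw0
    rw [h] at this
    simp at this
  ext x
  simp only [mem_setOf_eq]
  constructor
  · rintro ⟨t, rfl⟩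
    have : a + t • v - ξ = (t - t₀) • v := by rw [ht₀]; match_scalars <;> ring
    rw [this, real_inner_smul_left, hperp', mul_zero]
  · intro hx
    have hxm : x - ξ ∈ (Submodule.span ℝ ({‖w‖⁻¹ • w} : Set E2))ᗮ := by
      rw [Submodule.mem_orthogonal]
      intro u hu
      obtain ⟨c, rfl⟩ := Submodule.mem_span_singleton.1 hu
      rw [real_inner_smul_left, real_inner_comm, hx, mul_zero]
    rw [perp_span_eq hw0' hv0 (by rw [real_inner_comm]; exact hperp')] at hxm
    obtain ⟨c, hc⟩ := Submodule.mem_span_singleton.1 hxm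
    refine ⟨c + t₀, ?_⟩
    have : x = ξ + c • v := by rw [hc]; abel
    rw [this, ht₀]
    match_scalars <;> ring

/-- Two unit normals with the same kernel-line agree up to sign. -/
lemma kernel_line_unique {w₁ w₂ : E2} {ξ : E2} (h₁ : ‖w₁‖ = 1) (h₂ : ‖w₂‖ = 1)
    (heq : {x : E2 | (inner ℝ (x - ξ) w₁ : ℝ) = 0} = {x : E2 | (inner ℝ (x - ξ) w₂ : ℝ) = 0}) :
    w₂ = w₁ ∨ w₂ = -w₁ := by
  have hw₁0 : w₁ ≠ 0 := by intro h; rw [h] at h₁; simp at h₁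
  have hw₂0 : w₂ ≠ 0 := by intro h; rw [h] at h₂; simp at h₂
  obtain ⟨v, hv0, hperp⟩ := exists_perp hw₁0
  have hv₁ : ξ + v ∈ {x : E2 | (inner ℝ (x - ξ) w₁ : ℝ) = 0} := by
    simp only [mem_setOf_eq, add_sub_cancel_left]
    rw [real_inner_comm]; exact hperp
  rw [heq] at hv₁
  have hv₂ : (inner ℝ v w₂ : ℝ) = 0 := by
    simpa [add_sub_cancel_left] using hv₁
  have hw₂mem : w₂ ∈ (Submodule.span ℝ ({v} : Set E2))ᗮ := by
    rw [Submodule.mem_orthogonal]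
    intro u hu
    obtain ⟨c, rfl⟩ := Submodule.mem_span_singleton.1 hu
    rw [real_inner_smul_left, hv₂, mul_zero]
  rw [perp_span_eq hv0 hw₁0 (by rw [real_inner_comm]; exact hperp)] at hw₂mem
  obtain ⟨c, hc⟩ := Submodule.mem_span_singleton.1 hw₂mem
  have hcnorm : |c| = 1 := by
    have := congrArg norm hc
    rw [norm_smul, Real.norm_eq_abs, h₁, h₂, mul_one] at this
    exact this
  rcases abs_eq (by norm_num : (0:ℝ) ≤ 1) |>.1 hcnorm with h | h
  · left; rw [← hc, h, one_smul]
  · right; rw [← hc, h, neg_one_smul]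


lemma wedge_of_normal {Ω : Set E2} (hopen : IsOpen Ω) (hconv : Convex ℝ Ω) {ξ nv : E2}
    (hξ : ξ ∈ frontier Ω) (hΩne : Ω.Nonempty) (hunit : ‖nv‖ = 1)
    (hpos : ∀ z ∈ Ω, 0 < (inner ℝ (z - ξ) nv : ℝ))
    (huniq : ∀ L, IsSupportLine Ω ξ L → L = {x : E2 | (inner ℝ (x - ξ) nv : ℝ) = 0}) :
    ∀ ε : ℝ, 0 < ε → ∃ δ : ℝ, 0 < δ ∧ ∀ z ∈ frontier Ω, ‖z - ξ‖ < δ →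
      (inner ℝ (z - ξ) nv : ℝ) ≤ ε * ‖z - ξ‖ := by
  intro ε hε
  by_contra hcon
  push_neg at hcon
  have hcon' : ∀ δ : ℝ, 0 < δ → ∃ z, z ∈ frontier Ω ∧ ‖z - ξ‖ < δ ∧
      ε * ‖z - ξ‖ < (inner ℝ (z - ξ) nv : ℝ) := by
    intro δ hδ
    obtain ⟨z, hz1, hz2, hz3⟩ := hcon δ hδ
    exact ⟨z, hz1, hz2, hz3⟩
  choose z hzf hzδ hzι using fun k : ℕ => hcon' (1/(k+1)) (by positivity)
  have hzne : ∀ k, z k ≠ ξ := by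
    intro k h
    have := hzι k
    rw [h] at this
    simp at this
  have hznorm : ∀ k, 0 < ‖z k - ξ‖ := fun k => norm_pos_iff.2 (sub_ne_zero.2 (hzne k))
  -- supporting half-planes at z k
  have hHB : ∀ k : ℕ, ∃ ν : E2, ‖ν‖ = 1 ∧ ∀ b ∈ closure Ω, (inner ℝ ν (b - z k) : ℝ) ≤ 0 := by
    intro k
    obtain ⟨φ, u, hφΩ, hφz⟩ := geometric_hahn_banach_open hconv hopen
      (convex_singleton (z k)) (disjoint_singleton_right.2 (frontier_notMem hopen (hzf k)))
    have hφzk : u ≤ φ (z k) := hφz (z k) rfl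
    set ν₀ := (InnerProductSpace.toDual ℝ E2).symm φ with hν₀
    have hrepr : ∀ y : E2, (inner ℝ ν₀ y : ℝ) = φ y := fun y =>
      InnerProductSpace.toDual_symm_apply
    obtain ⟨w, hw⟩ := hΩne
    have hν₀0 : ν₀ ≠ 0 := by
      intro h
      have h1 := hφΩ w hw
      have h2 := hrepr w
      rw [h] at h2
      simp only [inner_zero_left] at h2
      have h3 := hrepr (z k)
      rw [h] at h3
      simp only [inner_zero_left] at h3
      rw [← h2] at h1
      rw [← h3] at hφzk
      linarith
    refine ⟨‖ν₀‖⁻¹ • ν₀, unit_normalize hν₀0, ?_⟩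
    have hstep : ∀ a ∈ Ω, (inner ℝ (‖ν₀‖⁻¹ • ν₀) (a - z k) : ℝ) ≤ 0 := by
      intro a ha
      rw [real_inner_smul_left]
      have h1 : (inner ℝ ν₀ (a - z k) : ℝ) = φ a - φ (z k) := by
        rw [inner_sub_right, hrepr, hrepr]
      have h2 : φ a - φ (z k) ≤ 0 := by
        have := hφΩ a ha
        linarith
      have h3 : (0:ℝ) ≤ ‖ν₀‖⁻¹ := by positivity
      rw [h1]
      exact mul_nonpos_of_nonneg_of_nonpos h3 h2
    intro b hb
    have hCl : IsClosed {x : E2 | (inner ℝ (‖ν₀‖⁻¹ • ν₀) (x - z k) : ℝ) ≤ 0} :=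
      isClosed_le (Continuous.inner continuous_const
        (continuous_id.sub continuous_const)) continuous_const
    exact closure_minimal hstep hCl hb
  choose m hmunit hmle using hHB
  set d : ℕ → E2 := fun k => ‖z k - ξ‖⁻¹ • (z k - ξ) with hd
  have hpair : ∀ k : ℕ, (m k, d k) ∈ (sphere (0:E2) 1) ×ˢ (sphere (0:E2) 1) := by
    intro k
    constructor
    · exact mem_sphere_zero_iff_norm.2 (hmunit k)
    · exact mem_sphere_zero_iff_norm.2 (unit_normalize (sub_ne_zero.2 (hzne k)))
  obtain ⟨⟨ν, dl⟩, hmem2, φs, hφsmono, hconv2⟩ :=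
    ((isCompact_sphere (0:E2) 1).prod (isCompact_sphere (0:E2) 1)).tendsto_subseq hpair
  have hν : Tendsto (fun k => m (φs k)) atTop (nhds ν) :=
    (continuous_fst.tendsto _).comp hconv2
  have hdl : Tendsto (fun k => d (φs k)) atTop (nhds dl) :=
    (continuous_snd.tendsto _).comp hconv2
  have hνunit : ‖ν‖ = 1 := mem_sphere_zero_iff_norm.1 hmem2.1
  have hν0 : ν ≠ 0 := by intro h; rw [h] at hνunit; simp at hνunit
  have hzlim : Tendsto (fun k => z (φs k)) atTop (nhds ξ) := by
    rw [tendsto_iff_dist_tendsto_zero]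
    apply squeeze_zero (fun k => dist_nonneg) (g := fun k : ℕ => 1/(k+1))
    · intro k
      rw [dist_eq_norm]
      have h1 : ‖z (φs k) - ξ‖ < 1/(φs k + 1) := hzδ (φs k)
      have h2 : (1:ℝ)/(φs k + 1) ≤ 1/(k+1) := by
        apply one_div_le_one_div_of_le (by positivity)
        have := hφsmono.le_apply (x := k)
        push_cast
        exact_mod_cast (by omega : k + 1 ≤ φs k + 1)
      linarith
    · exact tendsto_one_div_add_atTop_nhds_zero_nat
  -- limit inequalities
  have ha : ∀ a ∈ Ω, (inner ℝ ν (a - ξ) : ℝ) ≤ 0 := by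
    intro a haΩ
    refine le_of_tendsto (hν.inner (tendsto_const_nhds.sub hzlim)) ?_
    exact Eventually.of_forall fun k => hmle (φs k) a (subset_closure haΩ)
  have hb : (0:ℝ) ≤ inner ℝ ν dl := by
    refine ge_of_tendsto (hν.inner hdl) (Eventually.of_forall fun k => ?_)
    have h1 := hmle (φs k) ξ (frontier_subset_closure hξ)
    rw [show ξ - z (φs k) = -(z (φs k) - ξ) by abel, inner_neg_right] at h1
    have h2 : (0:ℝ) ≤ inner ℝ (m (φs k)) (z (φs k) - ξ) := by linarith
    show (0:ℝ) ≤ inner ℝ (m (φs k)) (d (φs k))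
    rw [hd]
    simp only
    rw [real_inner_smul_right]
    positivity
  have hcε : ε ≤ (inner ℝ dl nv : ℝ) := by
    refine ge_of_tendsto ((hdl.inner tendsto_const_nhds)) (Eventually.of_forall fun k => ?_)
    show ε ≤ (inner ℝ (d (φs k)) nv : ℝ)
    rw [hd]
    simp only
    rw [real_inner_smul_left]
    have h1 := hzι (φs k)
    have h2 : (0:ℝ) < ‖z (φs k) - ξ‖ := hznorm (φs k)
    have h4 : ε = ‖z (φs k) - ξ‖⁻¹ * (ε * ‖z (φs k) - ξ‖) := by field_simp
    rw [h4]
    exact mul_le_mul_of_nonneg_left (le_of_lt h1) (by positivity)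
  -- the limiting support line
  have hL' : IsSupportLine Ω ξ {x : E2 | (inner ℝ (x - ξ) ν : ℝ) = 0} := by
    refine ⟨isEuclideanLine_kernel ξ hν0, by simp, ?_⟩
    rw [eq_empty_iff_forall_notMem]
    rintro x ⟨hx0, hxΩ⟩
    obtain ⟨ρ, hρ, hball⟩ := Metric.isOpen_iff.1 hopen x hxΩ
    have hx' : x + (ρ/2) • ν ∈ Ω := by
      apply hball
      rw [mem_ball, dist_eq_norm]
      have : x + (ρ/2) • ν - x = (ρ/2) • ν := by abel
      rw [this, norm_smul, Real.norm_eq_abs, abs_of_pos (by linarith), hνunit]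
      linarith
    have h1 := ha _ hx'
    have h2 : (inner ℝ ν (x + (ρ/2) • ν - ξ) : ℝ) =
        (inner ℝ ν (x - ξ) : ℝ) + (ρ/2) * ‖ν‖^2 := by
      rw [show x + (ρ/2) • ν - ξ = (x - ξ) + (ρ/2) • ν by abel, inner_add_right,
        real_inner_smul_right, real_inner_self_eq_norm_sq]
    rw [h2, real_inner_comm (x - ξ) ν] at h1
    rw [mem_setOf_eq] at hx0
    rw [hx0, hνunit] at h1
    norm_num at h1
    linarith
  have heqL := huniq _ hL'
  rcases kernel_line_unique hνunit hunit heqL with h | h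
  · obtain ⟨w, hw⟩ := hΩne
    have h1 := hpos w hw
    have h2 := ha w hw
    rw [real_inner_comm] at h2
    rw [h] at h1
    linarith
  · rw [h] at hcε
    rw [inner_neg_right] at hcε
    rw [real_inner_comm] at hcε
    linarith

lemma support_normal {Ω : Set E2} (hopen : IsOpen Ω) (hconv : Convex ℝ Ω) {ξ : E2}
    (hξ : ξ ∈ frontier Ω) (hΩne : Ω.Nonempty)
    (hsupp : ∃! L : Set E2, IsSupportLine Ω ξ L) :
    ∃ nv : E2, ‖nv‖ = 1 ∧ (∀ z ∈ Ω, 0 < (inner ℝ (z - ξ) nv : ℝ)) ∧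
      ∀ ε : ℝ, 0 < ε → ∃ δ : ℝ, 0 < δ ∧ ∀ z ∈ frontier Ω, ‖z - ξ‖ < δ →
        (inner ℝ (z - ξ) nv : ℝ) ≤ ε * ‖z - ξ‖ := by
  obtain ⟨L₀, hL₀, huniq⟩ := hsupp
  obtain ⟨w₀, hw₀unit, hL₀eq⟩ := supportLine_normal hL₀.1 hL₀.2.1
  have hdisj := hL₀.2.2
  have hnz : ∀ z ∈ Ω, (inner ℝ (z - ξ) w₀ : ℝ) ≠ 0 := by
    intro zz hz h0
    have : zz ∈ L₀ ∩ Ω := ⟨by rw [hL₀eq]; exact h0, hz⟩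
    rw [hdisj] at this
    exact this
  have hsign : (∀ z ∈ Ω, 0 < (inner ℝ (z - ξ) w₀ : ℝ)) ∨
      (∀ z ∈ Ω, (inner ℝ (z - ξ) w₀ : ℝ) < 0) := by
    by_cases hall : ∀ z ∈ Ω, 0 < (inner ℝ (z - ξ) w₀ : ℝ)
    · exact Or.inl hall
    · push_neg at hall
      obtain ⟨z₁, hz₁, hz₁le⟩ := hall
      have hz₁lt : (inner ℝ (z₁ - ξ) w₀ : ℝ) < 0 := lt_of_le_of_ne hz₁le (hnz z₁ hz₁)
      right
      intro z₂ hz₂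
      by_contra hge
      push_neg at hge
      have hz₂gt : (0:ℝ) < inner ℝ (z₂ - ξ) w₀ := lt_of_le_of_ne hge (Ne.symm (hnz z₂ hz₂))
      set F : ℝ → ℝ := fun τ => (inner ℝ (z₁ + τ • (z₂ - z₁) - ξ) w₀ : ℝ) with hF
      have hFcont : Continuous F := by
        apply Continuous.inner _ continuous_const
        exact (continuous_const.add (continuous_id.smul continuous_const)).sub
          continuous_const
      have hF0 : F 0 = inner ℝ (z₁ - ξ) w₀ := by simp [hF]
      have hF1 : F 1 = inner ℝ (z₂ - ξ) w₀ := by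
        simp only [hF, one_smul]
        congr 1
        abel_nf
      have hmem : (0:ℝ) ∈ Icc (F 0) (F 1) := by
        rw [hF0, hF1]; exact ⟨le_of_lt hz₁lt, le_of_lt hz₂gt⟩
      obtain ⟨τ, hτIcc, hτ0⟩ := intermediate_value_Icc zero_le_one hFcont.continuousOn hmem
      have hpmem : z₁ + τ • (z₂ - z₁) ∈ Ω := by
        have h1 : (1 - τ) • z₁ + τ • z₂ ∈ Ω :=
          hconv hz₁ hz₂ (by linarith [hτIcc.2]) hτIcc.1 (by ring)
        have h2 : z₁ + τ • (z₂ - z₁) = (1 - τ) • z₁ + τ • z₂ := by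
          match_scalars <;> ring
        rw [h2]
        exact h1
      have : z₁ + τ • (z₂ - z₁) ∈ L₀ ∩ Ω := ⟨by rw [hL₀eq]; exact hτ0, hpmem⟩
      rw [hdisj] at this
      exact this
  rcases hsign with hpos | hneg
  · refine ⟨w₀, hw₀unit, hpos, ?_⟩
    apply wedge_of_normal hopen hconv hξ hΩne hw₀unit hpos
    intro L hL
    rw [← hL₀eq]
    exact huniq L hL
  · refine ⟨-w₀, by rw [norm_neg]; exact hw₀unit, ?_, ?_⟩
    · intro z hz
      rw [inner_neg_right]
      linarith [hneg z hz]
    · have hposneg : ∀ z ∈ Ω, 0 < (inner ℝ (z - ξ) (-w₀) : ℝ) := by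
        intro z hz
        rw [inner_neg_right]
        linarith [hneg z hz]
      apply wedge_of_normal hopen hconv hξ hΩne (by rw [norm_neg]; exact hw₀unit) hposneg
      intro L hL
      have h1 := huniq L hL
      rw [h1, hL₀eq]
      ext x
      simp only [mem_setOf_eq, inner_neg_right, neg_eq_zero]

lemma chord_lower_bound {Ω : Set E2} {ξ nv : E2} {ε δ : ℝ}
    (hε : 0 < ε) (hδ : 0 < δ)
    (hwedgeδ : ∀ z ∈ frontier Ω, ‖z - ξ‖ < δ → (inner ℝ (z - ξ) nv : ℝ) ≤ ε * ‖z - ξ‖)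
    {x y z : E2} (hxy : x ≠ y)
    (hz : z ∈ frontier Ω) {σ : ℝ} (hzeq : z - x = σ • (x - y))
    (hxδ : ‖x - ξ‖ < δ / 2) :
    (inner ℝ (x - ξ) nv : ℝ) - ε * ‖x - ξ‖ ≤
      ‖z - x‖ * (ε + |(inner ℝ (x - y) nv : ℝ)| / ‖x - y‖) ∨ δ / 2 ≤ ‖z - x‖ := by
  have hxyn : (0:ℝ) < ‖x - y‖ := norm_pos_iff.2 (sub_ne_zero.2 hxy)
  have htri : ‖z - ξ‖ ≤ ‖z - x‖ + ‖x - ξ‖ := by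
    have : z - ξ = (z - x) + (x - ξ) := by abel
    rw [this]; exact norm_add_le _ _
  by_cases hnear : ‖z - ξ‖ < δ
  · left
    have h1 := hwedgeδ z hz hnear
    have h2 : (inner ℝ (z - ξ) nv : ℝ) = inner ℝ (x - ξ) nv + inner ℝ (z - x) nv := by
      rw [show z - ξ = (x - ξ) + (z - x) by abel, inner_add_left]
    have h3 : |(inner ℝ (z - x) nv : ℝ)| = ‖z - x‖ * (|(inner ℝ (x - y) nv : ℝ)| / ‖x - y‖) := by
      rw [hzeq, real_inner_smul_left, abs_mul, norm_smul, Real.norm_eq_abs]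
      field_simp
    have h4 : -(‖z - x‖ * (|(inner ℝ (x - y) nv : ℝ)| / ‖x - y‖)) ≤ (inner ℝ (z - x) nv : ℝ) := by
      rw [← h3]; exact neg_abs_le _
    have h5 : ε * ‖z - ξ‖ ≤ ε * (‖z - x‖ + ‖x - ξ‖) :=
      mul_le_mul_of_nonneg_left htri (le_of_lt hε)
    have h6 : ε * ‖x - ξ‖ ≤ ε * (δ/2) := mul_le_mul_of_nonneg_left (le_of_lt hxδ) (le_of_lt hε)
    nlinarith [h1, h2, h4, h5]
  · right
    push_neg at hnear
    linarith

end Planar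

set_option maxHeartbeats 1000000 in
theorem asymptotic_geodesics_tendsto_zero
    (Ω : Set (EuclideanSpace ℝ (Fin 2)))
    (hopen : IsOpen Ω) (hconv : Convex ℝ Ω) (hbdd : Bornology.IsBounded Ω)
    (f g : ℝ → EuclideanSpace ℝ (Fin 2)) (ξ : EuclideanSpace ℝ (Fin 2))
    (hf : IsGeodesicLine Ω f) (hg : IsGeodesicLine Ω g)
    (hξ : ξ ∈ frontier Ω)
    (hfξ : Tendsto f atTop (nhds ξ)) (hgξ : Tendsto g atTop (nhds ξ))
    (hsupp : ∃! L : Set (EuclideanSpace ℝ (Fin 2)), IsSupportLine Ω ξ L) :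
    ∃ c : ℝ, Tendsto (fun t => hilbertDist Ω (f (t + c)) (g t)) atTop (nhds 0) := by
  have hΩne : Ω.Nonempty := ⟨f 0, hf.1 0⟩
  obtain ⟨nv, hnvu, hnvpos, hwedge⟩ := support_normal hopen hconv hξ hΩne hsupp
  obtain ⟨uf, huf0, hufdir, Cf, hCf, hflim⟩ := geodesic_struct hopen hconv hbdd hf hξ hfξ
  obtain ⟨ug, hug0, hugdir, Cg, hCg, hglim⟩ := geodesic_struct hopen hconv hbdd hg hξ hgξ
  have hufnv : 0 < (inner ℝ uf nv : ℝ) := by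
    obtain ⟨μ, hμ, hμeq⟩ := hufdir 0
    have h1 := hnvpos (f 0) (hf.1 0)
    rw [hμeq, real_inner_smul_left] at h1
    rcases mul_pos_iff.1 h1 with ⟨_, h⟩ | ⟨h', _⟩
    · exact h
    · linarith
  have hugnv : 0 < (inner ℝ ug nv : ℝ) := by
    obtain ⟨μ, hμ, hμeq⟩ := hugdir 0
    have h1 := hnvpos (g 0) (hg.1 0)
    rw [hμeq, real_inner_smul_left] at h1
    rcases mul_pos_iff.1 h1 with ⟨_, h⟩ | ⟨h', _⟩
    · exact h
    · linarith
  set Hf := Cf * (inner ℝ uf nv : ℝ) with hHf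
  set Hg := Cg * (inner ℝ ug nv : ℝ) with hHg
  have hHfpos : 0 < Hf := mul_pos hCf hufnv
  have hHgpos : 0 < Hg := mul_pos hCg hugnv
  clear_value Hf Hg
  set c := Real.log (Hf / Hg) with hc
  refine ⟨c, ?_⟩
  set A : ℝ → E2 := fun t => Real.exp t • (f (t + c) - ξ) with hA
  set B : ℝ → E2 := fun t => Real.exp t • (g t - ξ) with hB
  set X : E2 := Real.exp (-c) • (Cf • uf) with hX
  set Y : E2 := Cg • ug with hY
  have hshift : Tendsto (fun t : ℝ => t + c) atTop atTop :=
    tendsto_atTop_add_const_right _ c tendsto_id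
  have hAlim : Tendsto A atTop (nhds X) := by
    have h1 : Tendsto (fun t => Real.exp (t + c) • (f (t + c) - ξ)) atTop (nhds (Cf • uf)) :=
      hflim.comp hshift
    have h2 := h1.const_smul (Real.exp (-c))
    refine h2.congr fun t => ?_
    rw [smul_smul, ← Real.exp_add, show -c + (t + c) = t by ring]
  have hBlim : Tendsto B atTop (nhds Y) := hglim
  have hexpc : Real.exp c = Hf / Hg := by
    rw [hc]; exact Real.exp_log (div_pos hHfpos hHgpos)
  clear_value c
  have hXnv : (inner ℝ X nv : ℝ) = Hg := by
    rw [hX, real_inner_smul_left, real_inner_smul_left, Real.exp_neg, hexpc, ← hHf,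
      inv_div, div_mul_cancel₀ _ (ne_of_gt hHfpos)]
  have hYnv : (inner ℝ Y nv : ℝ) = Hg := by
    rw [hY, real_inner_smul_left]; exact hHg.symm
  have hXYnv : (inner ℝ (X - Y) nv : ℝ) = 0 := by rw [inner_sub_left, hXnv, hYnv, sub_self]
  clear_value X Y
  have hfc : Tendsto (fun t => f (t + c)) atTop (nhds ξ) := hfξ.comp hshift
  rw [Metric.tendsto_nhds]
  intro ε₁ hε₁
  set ρ := Real.exp (ε₁ / 4) - 1 with hρ
  have hρpos : 0 < ρ := by
    have := Real.add_one_le_exp (ε₁ / 4)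
    rw [hρ]; linarith
  clear_value ρ
  set ε := min (Hg / (2 * (‖X‖ + ‖Y‖ + 1))) (ρ * Hg / (8 * (‖X‖ + ‖Y‖ + ‖X - Y‖ + 1)))
    with hεd
  have hεpos : 0 < ε := lt_min (div_pos hHgpos (by positivity))
    (div_pos (mul_pos hρpos hHgpos) (by positivity))
  obtain ⟨δ, hδpos, hwedgeδ⟩ := hwedge ε hεpos
  have hεX : ε * ‖X‖ ≤ Hg / 2 := by
    have h1 : ε ≤ Hg / (2 * (‖X‖ + ‖Y‖ + 1)) := min_le_left _ _
    have h2 : (0:ℝ) ≤ ‖X‖ := norm_nonneg _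
    have h3 : (0:ℝ) ≤ ‖Y‖ := norm_nonneg _
    have h4 : ε * ‖X‖ ≤ Hg / (2 * (‖X‖ + ‖Y‖ + 1)) * ‖X‖ := mul_le_mul_of_nonneg_right h1 h2
    have h5 : Hg / (2 * (‖X‖ + ‖Y‖ + 1)) * ‖X‖ ≤ Hg / 2 := by
      rw [div_mul_eq_mul_div, div_le_div_iff₀ (by positivity) (by norm_num : (0:ℝ) < 2)]
      nlinarith
    linarith
  have hεY : ε * ‖Y‖ ≤ Hg / 2 := by
    have h1 : ε ≤ Hg / (2 * (‖X‖ + ‖Y‖ + 1)) := min_le_left _ _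
    have h2 : (0:ℝ) ≤ ‖X‖ := norm_nonneg _
    have h3 : (0:ℝ) ≤ ‖Y‖ := norm_nonneg _
    have h4 : ε * ‖Y‖ ≤ Hg / (2 * (‖X‖ + ‖Y‖ + 1)) * ‖Y‖ := mul_le_mul_of_nonneg_right h1 h3
    have h5 : Hg / (2 * (‖X‖ + ‖Y‖ + 1)) * ‖Y‖ ≤ Hg / 2 := by
      rw [div_mul_eq_mul_div, div_le_div_iff₀ (by positivity) (by norm_num : (0:ℝ) < 2)]
      nlinarith
    linarith
  have hεXY : ε * ‖X - Y‖ ≤ ρ * Hg / 8 := by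
    have h1 : ε ≤ ρ * Hg / (8 * (‖X‖ + ‖Y‖ + ‖X - Y‖ + 1)) := min_le_right _ _
    have h2 : (0:ℝ) ≤ ‖X - Y‖ := norm_nonneg _
    have h2' : (0:ℝ) ≤ ‖X‖ := norm_nonneg _
    have h3 : (0:ℝ) ≤ ‖Y‖ := norm_nonneg _
    have h4 : ε * ‖X - Y‖ ≤ ρ * Hg / (8 * (‖X‖ + ‖Y‖ + ‖X - Y‖ + 1)) * ‖X - Y‖ :=
      mul_le_mul_of_nonneg_right h1 h2
    have h5 : ρ * Hg / (8 * (‖X‖ + ‖Y‖ + ‖X - Y‖ + 1)) * ‖X - Y‖ ≤ ρ * Hg / 8 := by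
      rw [div_mul_eq_mul_div, div_le_div_iff₀ (by positivity) (by norm_num : (0:ℝ) < 8)]
      nlinarith [mul_pos hρpos hHgpos, mul_nonneg (mul_nonneg hρpos.le hHgpos.le) h2',
        mul_nonneg (mul_nonneg hρpos.le hHgpos.le) h3]
    linarith
  clear_value ε
  have hlhsLim : Tendsto (fun t => ε * ‖A t - B t‖ + |(inner ℝ (A t - B t) nv : ℝ)|) atTop
      (nhds (ε * ‖X - Y‖ + |(inner ℝ (X - Y) nv : ℝ)|)) := by
    have hAB := hAlim.sub hBlim
    exact (hAB.norm.const_mul ε).add ((hAB.inner tendsto_const_nhds).abs)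
  have hrhsXLim : Tendsto (fun t => ρ * ((inner ℝ (A t) nv : ℝ) - ε * ‖A t‖)) atTop
      (nhds (ρ * ((inner ℝ X nv : ℝ) - ε * ‖X‖))) :=
    ((hAlim.inner tendsto_const_nhds).sub (hAlim.norm.const_mul ε)).const_mul ρ
  have hrhsYLim : Tendsto (fun t => ρ * ((inner ℝ (B t) nv : ℝ) - ε * ‖B t‖)) atTop
      (nhds (ρ * ((inner ℝ Y nv : ℝ) - ε * ‖Y‖))) :=
    ((hBlim.inner tendsto_const_nhds).sub (hBlim.norm.const_mul ε)).const_mul ρ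
  have hkeyX : ε * ‖X - Y‖ + |(inner ℝ (X - Y) nv : ℝ)| <
      ρ * ((inner ℝ X nv : ℝ) - ε * ‖X‖) := by
    rw [hXYnv, hXnv, abs_zero, add_zero]
    have h6 : Hg / 2 ≤ Hg - ε * ‖X‖ := by linarith
    have h7 : ρ * (Hg / 2) ≤ ρ * (Hg - ε * ‖X‖) :=
      mul_le_mul_of_nonneg_left h6 (le_of_lt hρpos)
    have h8 : 0 < ρ * Hg := mul_pos hρpos hHgpos
    linarith only [hεXY, h7, h8]
  have hkeyY : ε * ‖X - Y‖ + |(inner ℝ (X - Y) nv : ℝ)| <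
      ρ * ((inner ℝ Y nv : ℝ) - ε * ‖Y‖) := by
    rw [hXYnv, hYnv, abs_zero, add_zero]
    have h6 : Hg / 2 ≤ Hg - ε * ‖Y‖ := by linarith
    have h7 : ρ * (Hg / 2) ≤ ρ * (Hg - ε * ‖Y‖) :=
      mul_le_mul_of_nonneg_left h6 (le_of_lt hρpos)
    have h8 : 0 < ρ * Hg := mul_pos hρpos hHgpos
    linarith only [hεXY, h7, h8]
  have hE4 := hlhsLim.eventually_lt hrhsXLim hkeyX
  have hE5 := hlhsLim.eventually_lt hrhsYLim hkeyY
  have hδρ : 0 < min (δ / 2) (ρ * δ / 4) :=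
    lt_min (by linarith) (div_pos (mul_pos hρpos hδpos) (by norm_num))
  have hE1 := (Metric.tendsto_nhds.1 hfc) _ hδρ
  have hE2 := (Metric.tendsto_nhds.1 hgξ) _ hδρ
  filter_upwards [hE4, hE5, hE1, hE2] with t h4 h5 h1 h2
  rw [Real.dist_eq, sub_zero]
  set x := f (t + c) with hxd
  set y := g t with hyd
  have hxΩ : x ∈ Ω := hf.1 _
  have hyΩ : y ∈ Ω := hg.1 _
  rw [dist_eq_norm] at h1 h2
  have hxδ : ‖x - ξ‖ < δ / 2 := lt_of_lt_of_le h1 (min_le_left _ _)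
  have hyδ : ‖y - ξ‖ < δ / 2 := lt_of_lt_of_le h2 (min_le_left _ _)
  by_cases hxy : x = y
  · rw [hxy, hilbertDist_self, abs_zero]; exact hε₁
  have hNpos : 0 < ‖x - y‖ := norm_pos_iff.2 (sub_ne_zero.2 hxy)
  have hNsmall : ‖x - y‖ < ρ * δ / 2 := by
    have h1' : ‖x - ξ‖ < ρ * δ / 4 := lt_of_lt_of_le h1 (min_le_right _ _)
    have h2' : ‖y - ξ‖ < ρ * δ / 4 := lt_of_lt_of_le h2 (min_le_right _ _)
    have h3 : ‖x - y‖ ≤ ‖x - ξ‖ + ‖y - ξ‖ := by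
      have e : x - y = (x - ξ) - (y - ξ) := by abel
      rw [e]; exact norm_sub_le _ _
    linarith
  obtain ⟨p', hp'f, hp'seg⟩ := exists_chord_point hopen hconv hbdd hxΩ hyΩ hxy
  obtain ⟨q', hq'f, hq'seg'⟩ := exists_chord_point hopen hconv hbdd hyΩ hxΩ (Ne.symm hxy)
  have hq'seg : y ∈ openSegment ℝ x q' := by rw [openSegment_symm]; exact hq'seg'
  have hval := hilbertDist_eq hopen hconv hxΩ hyΩ hxy hp'f hq'f hp'seg hq'seg
  set N := ‖x - y‖ with hNd
  set P := ‖p' - x‖ with hPd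
  set Q := ‖q' - y‖ with hQd
  have hPN : ‖p' - y‖ = P + N := norm_add_of_openSegment hp'seg
  have hQN : ‖q' - x‖ = Q + N := by
    have h7 := norm_add_of_openSegment hq'seg'
    rw [h7, hQd, hNd, norm_sub_rev y x]
  have hPpos : 0 < P := by
    have h7 : p' ∉ Ω := frontier_notMem hopen hp'f
    have h8 : p' ≠ x := fun h => h7 (h ▸ hxΩ)
    exact norm_pos_iff.2 (sub_ne_zero.2 h8)
  have hQpos : 0 < Q := by
    have h7 : q' ∉ Ω := frontier_notMem hopen hq'f
    have h8 : q' ≠ y := fun h => h7 (h ▸ hyΩ)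
    exact norm_pos_iff.2 (sub_ne_zero.2 h8)
  have hEt : 0 < Real.exp t := Real.exp_pos t
  have eAB : A t - B t = Real.exp t • (x - y) := by
    rw [hA, hB]
    simp only
    rw [← hxd, ← hyd, ← smul_sub]
    congr 1
    abel
  have e1 : ‖A t - B t‖ = Real.exp t * N := by
    rw [eAB, norm_smul, Real.norm_eq_abs, abs_of_pos hEt, hNd]
  have e2 : |(inner ℝ (A t - B t) nv : ℝ)| = Real.exp t * |(inner ℝ (x - y) nv : ℝ)| := by
    rw [eAB, real_inner_smul_left, abs_mul, abs_of_pos hEt]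
  have e3 : (inner ℝ (A t) nv : ℝ) = Real.exp t * (inner ℝ (x - ξ) nv : ℝ) := by
    rw [hA]; simp only; rw [← hxd, real_inner_smul_left]
  have e4 : ‖A t‖ = Real.exp t * ‖x - ξ‖ := by
    rw [hA]; simp only; rw [← hxd, norm_smul, Real.norm_eq_abs, abs_of_pos hEt]
  have e5 : (inner ℝ (B t) nv : ℝ) = Real.exp t * (inner ℝ (y - ξ) nv : ℝ) := by
    rw [hB]; simp only; rw [← hyd, real_inner_smul_left]
  have e6 : ‖B t‖ = Real.exp t * ‖y - ξ‖ := by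
    rw [hB]; simp only; rw [← hyd, norm_smul, Real.norm_eq_abs, abs_of_pos hEt]
  rw [e1, e2, e3, e4] at h4
  rw [e1, e2, e5, e6] at h5
  have h4u : ε * N + |(inner ℝ (x - y) nv : ℝ)| <
      ρ * ((inner ℝ (x - ξ) nv : ℝ) - ε * ‖x - ξ‖) := by
    apply lt_of_mul_lt_mul_left _ (le_of_lt hEt)
    calc Real.exp t * (ε * N + |(inner ℝ (x - y) nv : ℝ)|)
        = ε * (Real.exp t * N) + Real.exp t * |(inner ℝ (x - y) nv : ℝ)| := by ring
      _ < ρ * (Real.exp t * (inner ℝ (x - ξ) nv : ℝ) - ε * (Real.exp t * ‖x - ξ‖)) := h4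
      _ = Real.exp t * (ρ * ((inner ℝ (x - ξ) nv : ℝ) - ε * ‖x - ξ‖)) := by ring
  have h5u : ε * N + |(inner ℝ (x - y) nv : ℝ)| <
      ρ * ((inner ℝ (y - ξ) nv : ℝ) - ε * ‖y - ξ‖) := by
    apply lt_of_mul_lt_mul_left _ (le_of_lt hEt)
    calc Real.exp t * (ε * N + |(inner ℝ (x - y) nv : ℝ)|)
        = ε * (Real.exp t * N) + Real.exp t * |(inner ℝ (x - y) nv : ℝ)| := by ring
      _ < ρ * (Real.exp t * (inner ℝ (y - ξ) nv : ℝ) - ε * (Real.exp t * ‖y - ξ‖)) := h5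
      _ = Real.exp t * (ρ * ((inner ℝ (y - ξ) nv : ℝ) - ε * ‖y - ξ‖)) := by ring
  obtain ⟨s₁, hs₁, hp'eq⟩ := openSegment_param_gt hp'seg
  have hp'line : p' - x = (s₁ - 1) • (x - y) := by rw [hp'eq]; match_scalars <;> ring
  obtain ⟨s₂, hs₂, hq'eq⟩ := openSegment_param_gt hq'seg'
  have hq'line : q' - y = (s₂ - 1) • (y - x) := by rw [hq'eq]; match_scalars <;> ring
  have habs : |(inner ℝ (y - x) nv : ℝ)| = |(inner ℝ (x - y) nv : ℝ)| := by
    rw [show y - x = -(x - y) by abel, inner_neg_left, abs_neg]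
  clear_value x y N P Q
  have hCP : N ≤ ρ * P := by
    rcases chord_lower_bound hεpos hδpos hwedgeδ hxy hp'f hp'line hxδ with hnear | hfar
    · rw [← hPd, ← hNd] at hnear
      set κ := |(inner ℝ (x - y) nv : ℝ)| / N with hκ
      have hN0 : N ≠ 0 := ne_of_gt hNpos
      have hκN : κ * N = |(inner ℝ (x - y) nv : ℝ)| := by
        rw [hκ]; field_simp
      have hκpos : 0 ≤ κ := by
        rw [hκ]; exact div_nonneg (abs_nonneg _) (le_of_lt hNpos)
      have hεκ : 0 < ε + κ := by linarith only [hεpos, hκpos]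
      have hstep : N * (ε + κ) < (ρ * P) * (ε + κ) := by
        calc N * (ε + κ) = ε * N + |(inner ℝ (x - y) nv : ℝ)| := by rw [← hκN]; ring
          _ < ρ * ((inner ℝ (x - ξ) nv : ℝ) - ε * ‖x - ξ‖) := h4u
          _ ≤ ρ * (P * (ε + κ)) := mul_le_mul_of_nonneg_left hnear (le_of_lt hρpos)
          _ = (ρ * P) * (ε + κ) := by ring
      have h99 := (mul_lt_mul_iff_of_pos_right hεκ).1 hstep
      linarith only [h99]
    · rw [← hPd] at hfar
      have h7 : ρ * (δ / 2) ≤ ρ * P := mul_le_mul_of_nonneg_left hfar (le_of_lt hρpos)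
      have h8 : N < ρ * δ / 2 := hNsmall
      linarith only [h7, h8]
  have hCQ : N ≤ ρ * Q := by
    rcases chord_lower_bound hεpos hδpos hwedgeδ (Ne.symm hxy) hq'f hq'line hyδ
      with hnear | hfar
    · rw [← hQd] at hnear
      rw [habs, norm_sub_rev y x, ← hNd] at hnear
      set κ := |(inner ℝ (x - y) nv : ℝ)| / N with hκ
      have hN0 : N ≠ 0 := ne_of_gt hNpos
      have hκN : κ * N = |(inner ℝ (x - y) nv : ℝ)| := by
        rw [hκ]; field_simp
      have hκpos : 0 ≤ κ := by
        rw [hκ]; exact div_nonneg (abs_nonneg _) (le_of_lt hNpos)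
      have hεκ : 0 < ε + κ := by linarith only [hεpos, hκpos]
      have hstep : N * (ε + κ) < (ρ * Q) * (ε + κ) := by
        calc N * (ε + κ) = ε * N + |(inner ℝ (x - y) nv : ℝ)| := by rw [← hκN]; ring
          _ < ρ * ((inner ℝ (y - ξ) nv : ℝ) - ε * ‖y - ξ‖) := h5u
          _ ≤ ρ * (Q * (ε + κ)) := mul_le_mul_of_nonneg_left hnear (le_of_lt hρpos)
          _ = (ρ * Q) * (ε + κ) := by ring
      have h99 := (mul_lt_mul_iff_of_pos_right hεκ).1 hstep
      linarith only [h99]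
    · rw [← hQd] at hfar
      have h7 : ρ * (δ / 2) ≤ ρ * Q := mul_le_mul_of_nonneg_left hfar (le_of_lt hρpos)
      have h8 : N < ρ * δ / 2 := hNsmall
      linarith only [h7, h8]
  rw [hval, hPN, hQN]
  have hPQpos : 0 < P * Q := mul_pos hPpos hQpos
  have hargpos : 0 < (P + N) * (Q + N) / (P * Q) :=
    div_pos (mul_pos (by linarith only [hPpos, hNpos]) (by linarith only [hQpos, hNpos]))
      hPQpos
  have harg1 : 1 ≤ (P + N) * (Q + N) / (P * Q) := by
    rw [le_div_iff₀ hPQpos]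
    have h9 : P * Q ≤ (P + N) * (Q + N) :=
      mul_le_mul (by linarith only [hNpos]) (by linarith only [hNpos])
        (le_of_lt hQpos) (by linarith only [hNpos, hPpos])
    linarith only [h9]
  have hlogn : 0 ≤ Real.log ((P + N) * (Q + N) / (P * Q)) := Real.log_nonneg harg1
  rw [abs_of_nonneg hlogn]
  have hub : (P + N) * (Q + N) / (P * Q) ≤ (1 + ρ) ^ 2 := by
    rw [div_le_iff₀ hPQpos]
    have hPN' : P + N ≤ (1 + ρ) * P := by
      have : (1 + ρ) * P = P + ρ * P := by ring
      linarith only [hCP, this]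
    have hQN' : Q + N ≤ (1 + ρ) * Q := by
      have : (1 + ρ) * Q = Q + ρ * Q := by ring
      linarith only [hCQ, this]
    calc (P + N) * (Q + N) ≤ ((1 + ρ) * P) * ((1 + ρ) * Q) :=
          mul_le_mul hPN' hQN' (by linarith only [hQpos, hNpos])
            (mul_nonneg (by linarith only [hρpos]) (by linarith only [hPpos]))
      _ = (1 + ρ) ^ 2 * (P * Q) := by ring
  have hlog2 : Real.log ((P + N) * (Q + N) / (P * Q)) ≤ Real.log ((1 + ρ) ^ 2) :=
    Real.log_le_log hargpos hub
  have hfin : Real.log ((1 + ρ) ^ 2) = ε₁ / 2 := by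
    rw [hρ, show 1 + (Real.exp (ε₁ / 4) - 1) = Real.exp (ε₁ / 4) by ring, Real.log_pow,
      Real.log_exp]
    push_cast
    ring
  linarith only [hlog2, hfin, hε₁]
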